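/- As an identity of formal power series: (q;q)∞/(−q;q)∞ = 1 + 2·∑_{n=1}^{∞} (−1)ⁿ q^{n²}. -/

import Mathlib

open PowerSeries Finset

/-- The power series `∏_{k=0}^∞ g k`, defined coefficientwise via stabilized
finite partial products (valid when `g k ≡ 1` modulo degree `> k`). -/
noncomputable def iProd (g : ℕ → PowerSeries ℤ) : PowerSeries ℤ :=
  PowerSeries.mk fun n => PowerSeries.coeff (R := ℤ) n (∏ k ∈ Finset.range (n + 1), g k)

/-- `(q^j; q^j)_∞ = ∏_{k≥1} (1 - q^{jk})` as a formal power series. -/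
noncomputable def F (j : ℕ) : PowerSeries ℤ :=
  iProd fun k => 1 - (PowerSeries.X : PowerSeries ℤ) ^ (j * (k + 1))

/-- `(-q; q)_∞ = ∏_{k≥1} (1 + q^k)` as a formal power series. -/
noncomputable def Fneg : PowerSeries ℤ :=
  iProd fun k => 1 + (PowerSeries.X : PowerSeries ℤ) ^ (k + 1)

/-- Multiplicative inverse of a power series with constant coefficient `1`. -/
noncomputable def psInv (f : PowerSeries ℤ) : PowerSeries ℤ := PowerSeries.invOfUnit f 1

/-- equal in degrees ≤ N -/
def EqN (N : ℕ) (f g : PowerSeries ℤ) : Prop :=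
  ∀ n ≤ N, PowerSeries.coeff (R := ℤ) n f = PowerSeries.coeff (R := ℤ) n g

lemma EqN.refl (N : ℕ) (f : PowerSeries ℤ) : EqN N f f := fun _ _ => rfl

lemma EqN.symm {N f g} (h : EqN N f g) : EqN N g f := fun n hn => (h n hn).symm

lemma EqN.trans {N f g h} (h1 : EqN N f g) (h2 : EqN N g h) : EqN N f h :=
  fun n hn => (h1 n hn).trans (h2 n hn)

lemma EqN.add {N f g f' g'} (h1 : EqN N f g) (h2 : EqN N f' g') :
    EqN N (f + f') (g + g') := by
  intro n hn; simp [map_add, h1 n hn, h2 n hn]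

lemma EqN.mul {N f g f' g'} (h1 : EqN N f g) (h2 : EqN N f' g') :
    EqN N (f * f') (g * g') := by
  intro n hn
  rw [coeff_mul, coeff_mul]
  apply Finset.sum_congr rfl
  intro p hp
  rw [Finset.HasAntidiagonal.mem_antidiagonal] at hp
  rw [h1 p.1 (le_trans (by omega) hn), h2 p.2 (le_trans (by omega) hn)]

lemma eq_of_forall_eqN {f g : PowerSeries ℤ} (h : ∀ N, EqN N f g) : f = g :=
  PowerSeries.ext fun n => h n n le_rfl

lemma EqN.one_sub_X_pow {N e : ℕ} (he : N < e) :
    EqN N (1 - (PowerSeries.X : PowerSeries ℤ) ^ e) 1 := by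
  intro n hn
  rw [map_sub, PowerSeries.coeff_X_pow, if_neg (by omega : ¬ n = e), sub_zero]

lemma EqN.one_add_X_pow {N e : ℕ} (he : N < e) :
    EqN N (1 + (PowerSeries.X : PowerSeries ℤ) ^ e) 1 := by
  intro n hn
  rw [map_add, PowerSeries.coeff_X_pow, if_neg (by omega : ¬ n = e), add_zero]

lemma EqN.X_pow_mul {N e : ℕ} (he : N < e) (f : PowerSeries ℤ) :
    EqN N ((PowerSeries.X : PowerSeries ℤ) ^ e * f) 0 := by
  intro n hn
  rw [PowerSeries.coeff_X_pow_mul', if_neg (by omega : ¬ e ≤ n)]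
  simp

/-- partial products -/
noncomputable def PP (g : ℕ → PowerSeries ℤ) (m : ℕ) : PowerSeries ℤ :=
  ∏ k ∈ Finset.range m, g k

lemma eqN_PP_of_tail_one {g : ℕ → PowerSeries ℤ}
    (hg : ∀ k, ∀ n ≤ k, PowerSeries.coeff (R := ℤ) n (g k) = PowerSeries.coeff (R := ℤ) n 1)
    {N m m' : ℕ} (hm : N < m) (hm' : N < m') : EqN N (PP g m) (PP g m') := by
  -- both equal PP g (N+1)
  suffices H : ∀ m, N < m → EqN N (PP g m) (PP g (N + 1)) by
    exact (H m hm).trans (H m' hm').symm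
  intro m hm
  induction m with
  | zero => omega
  | succ m ih =>
    rcases Nat.lt_or_ge N m with h | h
    · have : EqN N (PP g (m + 1)) (PP g m) := by
        have h1 : EqN N (g m) 1 := fun n hn => hg m n (hn.trans h.le)
        have : EqN N (PP g m * g m) (PP g m * 1) := (EqN.refl N _).mul h1
        simpa [PP, Finset.prod_range_succ] using this
      exact this.trans (ih h)
    · have : m + 1 = N + 1 := by omega
      rw [this]
      exact EqN.refl _ _

lemma eqN_iProd {g : ℕ → PowerSeries ℤ}
    (hg : ∀ k, ∀ n ≤ k, PowerSeries.coeff (R := ℤ) n (g k) = PowerSeries.coeff (R := ℤ) n 1)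
    {N m : ℕ} (hm : N < m) : EqN N (iProd g) (PP g m) := by
  intro n hn
  have : PowerSeries.coeff (R := ℤ) n (iProd g) = PowerSeries.coeff (R := ℤ) n (PP g (n + 1)) := by
    simp [iProd, PP]
  rw [this]
  exact eqN_PP_of_tail_one hg (n.lt_succ_self) (show n < m by omega) n le_rfl

/-- factor families -/
noncomputable abbrev g1 : ℕ → PowerSeries ℤ := fun k => 1 - (PowerSeries.X : PowerSeries ℤ) ^ (k + 1)
noncomputable abbrev g2 : ℕ → PowerSeries ℤ := fun k => 1 - (PowerSeries.X : PowerSeries ℤ) ^ (2 * (k + 1))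
noncomputable abbrev godd : ℕ → PowerSeries ℤ := fun k => 1 - (PowerSeries.X : PowerSeries ℤ) ^ (2 * k + 1)
noncomputable abbrev gneg : ℕ → PowerSeries ℤ := fun k => 1 + (PowerSeries.X : PowerSeries ℤ) ^ (k + 1)

noncomputable def POdd : PowerSeries ℤ := iProd godd

lemma hg1 : ∀ k, ∀ n ≤ k, PowerSeries.coeff (R := ℤ) n (g1 k) = PowerSeries.coeff (R := ℤ) n 1 :=
  fun k n hn => EqN.one_sub_X_pow (N := k) (by omega) n hn
lemma hg2 : ∀ k, ∀ n ≤ k, PowerSeries.coeff (R := ℤ) n (g2 k) = PowerSeries.coeff (R := ℤ) n 1 :=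
  fun k n hn => EqN.one_sub_X_pow (N := k) (by omega) n hn
lemma hgodd : ∀ k, ∀ n ≤ k, PowerSeries.coeff (R := ℤ) n (godd k) = PowerSeries.coeff (R := ℤ) n 1 :=
  fun k n hn => EqN.one_sub_X_pow (N := k) (by omega) n hn
lemma hgneg : ∀ k, ∀ n ≤ k, PowerSeries.coeff (R := ℤ) n (gneg k) = PowerSeries.coeff (R := ℤ) n 1 :=
  fun k n hn => EqN.one_add_X_pow (N := k) (by omega) n hn

lemma F_one_eq : F 1 = iProd g1 := by
  unfold F iProd; simp
lemma F_two_eq : F 2 = iProd g2 := rfl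
lemma Fneg_eq : Fneg = iProd gneg := rfl

/-- interleaving: odd·even = all -/
lemma PP_odd_mul_even (m : ℕ) : PP godd m * PP g2 m = PP g1 (2 * m) := by
  induction m with
  | zero => simp [PP]
  | succ m ih =>
    rw [show 2 * (m + 1) = (2 * m) + 1 + 1 by ring]
    simp only [PP, Finset.prod_range_succ] at *
    linear_combination (godd m * g2 m) * ih

/-- Euler: (1+q^k)(1-q^{2k+1}) products -/
lemma PP_neg_mul_odd_mul_all (m : ℕ) : PP gneg m * PP godd m * PP g1 m = PP g1 (2 * m) := by
  induction m with
  | zero => simp [PP]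
  | succ m ih =>
    rw [show 2 * (m + 1) = (2 * m) + 1 + 1 by ring]
    simp only [PP, Finset.prod_range_succ] at *
    linear_combination (gneg m * godd m * g1 m) * ih

lemma constantCoeff_iProd (g : ℕ → PowerSeries ℤ) :
    PowerSeries.constantCoeff (R := ℤ) (iProd g) = PowerSeries.constantCoeff (R := ℤ) (g 0) := by
  rw [← PowerSeries.coeff_zero_eq_constantCoeff_apply,
    ← PowerSeries.coeff_zero_eq_constantCoeff_apply]
  simp [iProd]

lemma constantCoeff_F1 : PowerSeries.constantCoeff (R := ℤ) (F 1) = 1 := by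
  rw [F_one_eq, constantCoeff_iProd]; simp
lemma constantCoeff_Fneg : PowerSeries.constantCoeff (R := ℤ) Fneg = 1 := by
  rw [Fneg_eq, constantCoeff_iProd]; simp
lemma constantCoeff_F2 : PowerSeries.constantCoeff (R := ℤ) (F 2) = 1 := by
  rw [F_two_eq, constantCoeff_iProd]; simp

lemma F1_mul_psInv : F 1 * psInv (F 1) = 1 :=
  PowerSeries.mul_invOfUnit _ _ (by rw [constantCoeff_F1]; rfl)
lemma Fneg_mul_psInv : Fneg * psInv Fneg = 1 :=
  PowerSeries.mul_invOfUnit _ _ (by rw [constantCoeff_Fneg]; rfl)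
lemma F2_mul_psInv : F 2 * psInv (F 2) = 1 :=
  PowerSeries.mul_invOfUnit _ _ (by rw [constantCoeff_F2]; rfl)

/-- (I) -/
lemma F1_eq_POdd_mul_F2 : F 1 = POdd * F 2 := by
  apply eq_of_forall_eqN; intro N
  have h1 : EqN N (F 1) (PP g1 (2 * (N + 1))) := by
    rw [F_one_eq]; exact eqN_iProd hg1 (by omega)
  have h2 : EqN N (POdd * F 2) (PP godd (N+1) * PP g2 (N+1)) :=
    (eqN_iProd hgodd (by omega)).mul (by rw [F_two_eq]; exact eqN_iProd hg2 (by omega))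
  refine h1.trans ?_
  rw [← PP_odd_mul_even]
  exact h2.symm

/-- (II) -/
lemma Fneg_mul_POdd : Fneg * POdd = 1 := by
  have key : Fneg * POdd * F 1 = F 1 := by
    apply eq_of_forall_eqN; intro N
    have h1 : EqN N (Fneg * POdd * F 1) (PP gneg (N+1) * PP godd (N+1) * PP g1 (N+1)) :=
      (((by rw [Fneg_eq]; exact eqN_iProd hgneg (by omega) : EqN N Fneg _).mul
        (eqN_iProd hgodd (by omega))).mul (by rw [F_one_eq]; exact eqN_iProd hg1 (by omega)))
    refine h1.trans ?_
    rw [PP_neg_mul_odd_mul_all]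
    exact (by rw [F_one_eq]; exact eqN_iProd hg1 (by omega) : EqN N (F 1) _).symm
  calc Fneg * POdd = Fneg * POdd * (F 1 * psInv (F 1)) := by rw [F1_mul_psInv, mul_one]
    _ = (Fneg * POdd * F 1) * psInv (F 1) := by ring
    _ = F 1 * psInv (F 1) := by rw [key]
    _ = 1 := F1_mul_psInv

lemma psInv_Fneg_eq_POdd : psInv Fneg = POdd := by
  calc psInv Fneg = (Fneg * POdd) * psInv Fneg := by rw [Fneg_mul_POdd, one_mul]
    _ = POdd * (Fneg * psInv Fneg) := by ring
    _ = POdd := by rw [Fneg_mul_psInv, mul_one]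

/-- Gaussian binomial `[M, k]` in the variable `q²`, as a power series. -/
noncomputable def qb : ℕ → ℤ → PowerSeries ℤ
  | 0, k => if k = 0 then 1 else 0
  | (M+1), k => qb M k +
      (PowerSeries.X : PowerSeries ℤ) ^ (2 * ((M : ℤ) + 1 - k).toNat) * qb M (k - 1)

lemma qb_zero_eq (k : ℤ) : qb 0 k = if k = 0 then 1 else 0 := by rw [qb]

lemma qb_succ_eq (M : ℕ) (k : ℤ) : qb (M+1) k = qb M k +
    (PowerSeries.X : PowerSeries ℤ) ^ (2 * ((M : ℤ) + 1 - k).toNat) * qb M (k - 1) := by rw [qb]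

lemma qb_neg {M : ℕ} {k : ℤ} (hk : k < 0) : qb M k = 0 := by
  induction M generalizing k with
  | zero => rw [qb_zero_eq, if_neg (by omega)]
  | succ M ih => rw [qb_succ_eq, ih hk, ih (by omega), zero_add, mul_zero]

lemma qb_gt {M : ℕ} {k : ℤ} (hk : (M : ℤ) < k) : qb M k = 0 := by
  induction M generalizing k with
  | zero => rw [qb_zero_eq, if_neg (by omega)]
  | succ M ih =>
    rw [qb_succ_eq, ih (by push_cast at hk ⊢; omega), ih (by push_cast at hk ⊢; omega),
      zero_add, mul_zero]

lemma qb_zero {M : ℕ} : qb M 0 = 1 := by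
  induction M with
  | zero => rw [qb_zero_eq, if_pos rfl]
  | succ M ih => rw [qb_succ_eq, ih, qb_neg (by omega), mul_zero, add_zero]

lemma qb_self {M : ℕ} : qb M M = 1 := by
  induction M with
  | zero => rw [show ((0:ℕ):ℤ) = 0 by norm_num, qb_zero_eq, if_pos rfl]
  | succ M ih =>
    rw [qb_succ_eq, qb_gt (by push_cast; omega)]
    rw [show ((M:ℤ) + 1 - ((M:ℕ)+1 : ℕ)) = 0 by push_cast; ring]
    rw [show (((M:ℕ)+1 : ℕ) : ℤ) - 1 = (M:ℤ) by push_cast; ring]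
    simp [ih]

/-- the other Pascal recurrence -/
lemma qb_r1 (M : ℕ) (k : ℤ) :
    qb (M+1) k = qb M (k - 1) +
      (PowerSeries.X : PowerSeries ℤ) ^ (2 * k.toNat) * qb M k := by
  induction M generalizing k with
  | zero =>
    rcases eq_or_ne k 0 with rfl | h0
    · rw [qb_succ_eq, qb_zero_eq, qb_zero_eq, if_pos rfl, if_neg (by omega)]
      simp
    rcases eq_or_ne k 1 with rfl | h1
    · simp only [qb_succ_eq, qb_zero_eq]
      norm_num
    · simp only [qb_succ_eq, qb_zero_eq, if_neg h0, if_neg (show k - 1 ≠ 0 by omega)]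
      simp
  | succ M ih =>
    rcases lt_or_ge k 0 with hk | hk
    · rw [qb_neg hk, qb_neg (by omega), qb_neg hk, mul_zero, add_zero]
    rcases lt_or_ge ((M : ℤ) + 2) k with hk2 | hk2
    · rw [qb_gt (by push_cast; omega), qb_gt (by push_cast; omega),
        qb_gt (by push_cast; omega), mul_zero, add_zero]
    rcases lt_or_ge k 1 with hk1 | hk1
    · have : k = 0 := by omega
      subst this
      rw [qb_zero, qb_zero, qb_neg (by omega)]
      simp
    -- main case 1 ≤ k ≤ M+2
    have L : qb (M+1+1) k = (qb M (k-1) + (PowerSeries.X : PowerSeries ℤ)^(2*k.toNat) * qb M k) +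
        (PowerSeries.X : PowerSeries ℤ)^(2*((M:ℤ)+1+1-k).toNat) *
          (qb M (k-1-1) + (PowerSeries.X : PowerSeries ℤ)^(2*(k-1).toNat) * qb M (k-1)) := by
      rw [qb_succ_eq (M+1) k, ih k, ih (k-1)]
      push_cast
      ring_nf
    have R1 : qb (M+1) (k-1) = qb M (k-1) +
        (PowerSeries.X : PowerSeries ℤ)^(2*((M:ℤ)+1+1-k).toNat) * qb M (k-1-1) := by
      rw [qb_succ_eq, show ((M:ℤ)+1-(k-1)).toNat = ((M:ℤ)+1+1-k).toNat from by omega]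
    have R2 : qb (M+1) k = qb M k +
        (PowerSeries.X : PowerSeries ℤ)^(2*((M:ℤ)+1-k).toNat) * qb M (k-1) := qb_succ_eq M k
    rcases lt_or_ge ((M:ℤ)+1) k with hk3 | hk3
    · -- boundary k = M+2 : the shifted coefficient vanishes
      have hz : qb M (k-1) = 0 := qb_gt (by omega)
      rw [L, R1, R2, hz]
      ring
    rw [L, R1, R2]
    have epow : (PowerSeries.X : PowerSeries ℤ)^(2*((M:ℤ)+1+1-k).toNat) *
        (PowerSeries.X : PowerSeries ℤ)^(2*(k-1).toNat) =
        (PowerSeries.X : PowerSeries ℤ)^(2*k.toNat) *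
        (PowerSeries.X : PowerSeries ℤ)^(2*((M:ℤ)+1-k).toNat) := by
      rw [← pow_add, ← pow_add]
      have hK1 : 1 ≤ k.toNat := by omega
      have hK2 : k.toNat ≤ M + 1 := by omega
      have h1 : ((M:ℤ)+1+1-k).toNat = M + 2 - k.toNat := by omega
      have h2 : ((M:ℤ)+1-k).toNat = M + 1 - k.toNat := by omega
      have h3 : (k-1).toNat = k.toNat - 1 := by omega
      have : (2*((M:ℤ)+1+1-k).toNat + 2*(k-1).toNat) = (2*k.toNat + 2*((M:ℤ)+1-k).toNat) := by
        rw [h1, h2, h3]; omega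
      rw [this]
    linear_combination (qb M (k-1)) * epow

lemma PP_succ (g : ℕ → PowerSeries ℤ) (m : ℕ) : PP g (m + 1) = PP g m * g m :=
  Finset.prod_range_succ g m

lemma qb_mul_PP : ∀ (M : ℕ) (k : ℕ), k ≤ M →
    qb M k * PP g2 k * PP g2 (M - k) = PP g2 M := by
  intro M
  induction M with
  | zero =>
    intro k hk
    interval_cases k
    simp [PP, qb_zero]
  | succ M ih =>
    intro k hk
    rcases Nat.eq_zero_or_pos k with rfl | hk1
    · simp [PP, qb_zero]
    rcases eq_or_lt_of_le hk with rfl | hkM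
    · rw [qb_self, Nat.sub_self]
      simp [PP]
    -- 1 ≤ k ≤ M
    obtain ⟨a, b, rfl, hb⟩ : ∃ a b, k = a + 1 ∧ M = a + 1 + b :=
      ⟨k - 1, M - k, by omega, by omega⟩
    subst hb
    have IH1 := ih (a+1) (by omega)
    have IH2 := ih a (by omega)
    rw [show a + 1 + b - (a+1) = b by omega] at IH1
    rw [show a + 1 + b - a = b + 1 by omega] at IH2
    rw [show a + 1 + b + 1 - (a+1) = b + 1 by omega]
    rw [qb_succ_eq]
    rw [show ((a + 1 + b : ℕ) : ℤ) + 1 - ((a+1 : ℕ) : ℤ) = ((b:ℤ) + 1) by push_cast; ring]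
    rw [show ((b:ℤ) + 1).toNat = b + 1 by omega]
    rw [show ((a + 1 : ℕ) : ℤ) - 1 = ((a : ℕ) : ℤ) by push_cast; ring]
    rw [PP_succ g2 a, PP_succ g2 b, PP_succ g2 (a+1+b)] at *
    linear_combination (g2 b) * IH1 +
      (PowerSeries.X : PowerSeries ℤ)^(2*(b+1)) * (g2 a) * IH2

lemma eqN_qb {N n k : ℕ} (h1 : N < k) (h2 : N < 2*n - k) (hk : k ≤ 2*n) :
    EqN N (qb (2*n) k) (psInv (F 2)) := by
  have A := qb_mul_PP (2*n) k hk
  have e1 : EqN N (F 2) (PP g2 k) := by rw [F_two_eq]; exact eqN_iProd hg2 h1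
  have e2 : EqN N (F 2) (PP g2 (2*n - k)) := by rw [F_two_eq]; exact eqN_iProd hg2 h2
  have e3 : EqN N (F 2) (PP g2 (2*n)) := by
    rw [F_two_eq]; exact eqN_iProd hg2 (by omega)
  have E : EqN N (qb (2*n) k * F 2 * F 2) (F 2) := by
    have := ((EqN.refl N (qb (2*n) k)).mul e1).mul e2
    rw [A] at this
    exact this.trans e3.symm
  have E2 := E.mul (EqN.refl N (psInv (F 2) * psInv (F 2)))
  have l : qb (2*n) k * F 2 * F 2 * (psInv (F 2) * psInv (F 2)) = qb (2*n) k := by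
    calc qb (2*n) k * F 2 * F 2 * (psInv (F 2) * psInv (F 2))
        = qb (2*n) k * ((F 2 * psInv (F 2)) * (F 2 * psInv (F 2))) := by ring
      _ = qb (2*n) k := by rw [F2_mul_psInv]; simp
  have r : F 2 * (psInv (F 2) * psInv (F 2)) = psInv (F 2) := by
    calc F 2 * (psInv (F 2) * psInv (F 2)) = (F 2 * psInv (F 2)) * psInv (F 2) := by ring
      _ = psInv (F 2) := by rw [F2_mul_psInv, one_mul]
  rw [l, r] at E2
  exact E2

lemma natAbs_sq_cast (a : ℤ) : ((a.natAbs ^ 2 : ℕ) : ℤ) = a ^ 2 := by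
  rw [Nat.cast_pow]
  exact Int.natAbs_sq a

/-- the weight `(-1)^(k+n) q^{(k-n)^2}` -/
noncomputable def w (n k : ℕ) : PowerSeries ℤ :=
  ((-1 : PowerSeries ℤ))^(k+n) * (PowerSeries.X : PowerSeries ℤ) ^ ((((k:ℤ) - (n:ℤ)).natAbs)^2)

lemma w_succ_succ (n k : ℕ) : w (n+1) (k+1) = w n k := by
  unfold w
  congr 1
  · rw [show k+1+(n+1) = (k+n)+2 by ring, pow_add]
    norm_num
  · congr 2
    push_cast
    ring

/-- double-Pascal expansion -/
lemma qb_expand (n : ℕ) (k : ℤ) :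
    qb (2*n+2) k = (PowerSeries.X : PowerSeries ℤ)^(2*k.toNat) * qb (2*n) k
      + (1 + (PowerSeries.X : PowerSeries ℤ)^(2*(2*n+1))) * qb (2*n) (k-1)
      + (PowerSeries.X : PowerSeries ℤ)^(2*((2*(n:ℤ)+2)-k).toNat) * qb (2*n) (k-2) := by
  have h1 : qb (2*n+2) k = qb (2*n+1) k +
      (PowerSeries.X : PowerSeries ℤ)^(2*((2*(n:ℤ)+2)-k).toNat) * qb (2*n+1) (k-1) := by
    rw [show 2*n+2 = (2*n+1)+1 by ring, qb_succ_eq]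
    rw [show ((2*n+1 : ℕ) : ℤ) + 1 - k = 2*(n:ℤ)+2-k by push_cast; ring]
  have h2 : qb (2*n+1) k = qb (2*n) (k-1) +
      (PowerSeries.X : PowerSeries ℤ)^(2*k.toNat) * qb (2*n) k := qb_r1 (2*n) k
  have h3 : qb (2*n+1) (k-1) = qb (2*n) (k-2) +
      (PowerSeries.X : PowerSeries ℤ)^(2*(k-1).toNat) * qb (2*n) (k-1) := by
    rw [qb_r1 (2*n) (k-1)]
    rw [show k - 1 - 1 = k - 2 by ring]
  rw [h1, h2, h3]
  rcases lt_or_ge k 1 with hk | hk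
  · rw [qb_neg (by omega)]
    ring
  rcases lt_or_ge ((2*n : ℕ) : ℤ) (k - 1) with hk2 | hk2
  · rw [qb_gt hk2]
    ring
  · -- 1 ≤ k ≤ 2n+1 : merge exponents
    have e : 2*((2*(n:ℤ)+2)-k).toNat + 2*(k-1).toNat = 2*(2*n+1) := by
      push_cast at hk2
      have c1 : ((2*(n:ℤ)+2)-k).toNat = 2*n+2 - k.toNat := by omega
      have c2 : (k-1).toNat = k.toNat - 1 := by omega
      rw [c1, c2]
      omega
    have epow : (PowerSeries.X : PowerSeries ℤ)^(2*((2*(n:ℤ)+2)-k).toNat) *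
        (PowerSeries.X : PowerSeries ℤ)^(2*(k-1).toNat) =
        (PowerSeries.X : PowerSeries ℤ)^(2*(2*n+1)) := by
      rw [← pow_add, e]
    linear_combination (qb (2*n) (k-1)) * epow

noncomputable def GS (n : ℕ) : PowerSeries ℤ :=
  ∑ k ∈ Finset.range (2*n+1), w n k * qb (2*n) (k : ℤ)

lemma exp1 (n k : ℕ) :
    (((k:ℤ) - ((n+1:ℕ):ℤ)).natAbs)^2 + 2*k = (2*n+1) + (((k:ℤ) - (n:ℤ)).natAbs)^2 := by
  refine Nat.cast_inj (R := ℤ) |>.mp ?_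
  push_cast
  rw [sq_abs, sq_abs]
  ring

lemma exp3 (n k : ℕ) (h : k ≤ 2*n) :
    ((((k+2:ℕ):ℤ) - ((n+1:ℕ):ℤ)).natAbs)^2 + 2*(2*n-k)
      = (2*n+1) + (((k:ℤ) - (n:ℤ)).natAbs)^2 := by
  refine Nat.cast_inj (R := ℤ) |>.mp ?_
  push_cast [h]
  rw [sq_abs, sq_abs]
  ring

lemma T1_term (n k : ℕ) (Q : PowerSeries ℤ) :
    w (n+1) k * ((PowerSeries.X : PowerSeries ℤ)^(2*k) * Q)
      = -((PowerSeries.X : PowerSeries ℤ)^(2*n+1)) * (w n k * Q) := by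
  have hsign : ((-1 : PowerSeries ℤ))^(k+(n+1)) = -(-1 : PowerSeries ℤ)^(k+n) := by
    rw [show k+(n+1) = (k+n)+1 by ring, pow_succ]
    ring
  have hX : (PowerSeries.X : PowerSeries ℤ)^((((k:ℤ) - ((n+1:ℕ):ℤ)).natAbs)^2) *
      (PowerSeries.X : PowerSeries ℤ)^(2*k)
      = (PowerSeries.X : PowerSeries ℤ)^(2*n+1) *
        (PowerSeries.X : PowerSeries ℤ)^((((k:ℤ) - (n:ℤ)).natAbs)^2) := by
    rw [← pow_add, ← pow_add, exp1]
  calc w (n+1) k * ((PowerSeries.X : PowerSeries ℤ)^(2*k) * Q)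
      = ((-1 : PowerSeries ℤ))^(k+(n+1)) *
        ((PowerSeries.X : PowerSeries ℤ)^((((k:ℤ) - ((n+1:ℕ):ℤ)).natAbs)^2) *
          (PowerSeries.X : PowerSeries ℤ)^(2*k)) * Q := by unfold w; push_cast; ring
    _ = (-(-1 : PowerSeries ℤ)^(k+n)) * ((PowerSeries.X : PowerSeries ℤ)^(2*n+1) *
          (PowerSeries.X : PowerSeries ℤ)^((((k:ℤ) - (n:ℤ)).natAbs)^2)) * Q := by
        rw [hsign, hX]
    _ = -((PowerSeries.X : PowerSeries ℤ)^(2*n+1)) * (w n k * Q) := by unfold w; ring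

lemma T3_term (n k : ℕ) (h : k ≤ 2*n) (Q : PowerSeries ℤ) :
    w (n+1) (k+2) * ((PowerSeries.X : PowerSeries ℤ)^(2*(2*n-k)) * Q)
      = -((PowerSeries.X : PowerSeries ℤ)^(2*n+1)) * (w n k * Q) := by
  have hsign : ((-1 : PowerSeries ℤ))^((k+2)+(n+1)) = -(-1 : PowerSeries ℤ)^(k+n) := by
    rw [show (k+2)+(n+1) = (k+n)+3 by ring, pow_add]
    norm_num
  have hX : (PowerSeries.X : PowerSeries ℤ)^(((((k+2:ℕ):ℤ) - ((n+1:ℕ):ℤ)).natAbs)^2) *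
      (PowerSeries.X : PowerSeries ℤ)^(2*(2*n-k))
      = (PowerSeries.X : PowerSeries ℤ)^(2*n+1) *
        (PowerSeries.X : PowerSeries ℤ)^((((k:ℤ) - (n:ℤ)).natAbs)^2) := by
    rw [← pow_add, ← pow_add, exp3 n k h]
  calc w (n+1) (k+2) * ((PowerSeries.X : PowerSeries ℤ)^(2*(2*n-k)) * Q)
      = ((-1 : PowerSeries ℤ))^((k+2)+(n+1)) *
        ((PowerSeries.X : PowerSeries ℤ)^(((((k+2:ℕ):ℤ) - ((n+1:ℕ):ℤ)).natAbs)^2) *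
          (PowerSeries.X : PowerSeries ℤ)^(2*(2*n-k))) * Q := by unfold w; ring
    _ = (-(-1 : PowerSeries ℤ)^(k+n)) * ((PowerSeries.X : PowerSeries ℤ)^(2*n+1) *
          (PowerSeries.X : PowerSeries ℤ)^((((k:ℤ) - (n:ℤ)).natAbs)^2)) * Q := by
        rw [hsign, hX]
    _ = -((PowerSeries.X : PowerSeries ℤ)^(2*n+1)) * (w n k * Q) := by unfold w; ring

lemma GS_succ (n : ℕ) : GS (n+1) = godd n ^ 2 * GS n := by
  have GSdef : ∀ m, GS m = ∑ k ∈ Finset.range (2*m+1), w m k * qb (2*m) (k:ℤ) := fun _ => rfl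
  rw [GSdef (n+1)]
  rw [show 2*(n+1)+1 = (2*n+1)+1+1 by ring]
  have hexp : ∀ k ∈ Finset.range ((2*n+1)+1+1),
      w (n+1) k * qb (2*(n+1)) (k:ℤ)
      = w (n+1) k * ((PowerSeries.X : PowerSeries ℤ)^(2*k) * qb (2*n) (k:ℤ))
        + (1 + (PowerSeries.X : PowerSeries ℤ)^(2*(2*n+1))) *
            (w (n+1) k * qb (2*n) ((k:ℤ)-1))
        + w (n+1) k * ((PowerSeries.X : PowerSeries ℤ)^(2*((2*(n:ℤ)+2)-(k:ℤ)).toNat) *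
            qb (2*n) ((k:ℤ)-2)) := by
    intro k _
    rw [show 2*(n+1) = 2*n+2 by ring, qb_expand]
    rw [show ((k:ℤ)).toNat = k from Int.toNat_natCast k]
    ring
  rw [Finset.sum_congr rfl hexp, Finset.sum_add_distrib, Finset.sum_add_distrib]
  have hT1 : ∑ k ∈ Finset.range ((2*n+1)+1+1),
      w (n+1) k * ((PowerSeries.X : PowerSeries ℤ)^(2*k) * qb (2*n) (k:ℤ))
      = -((PowerSeries.X : PowerSeries ℤ)^(2*n+1)) * GS n := by
    rw [Finset.sum_range_succ, Finset.sum_range_succ]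
    rw [qb_gt (show ((2*n:ℕ):ℤ) < (((2*n+1:ℕ):ℕ):ℤ) by push_cast; omega)]
    rw [qb_gt (show ((2*n:ℕ):ℤ) < (((2*n+1+1:ℕ):ℕ):ℤ) by push_cast; omega)]
    rw [mul_zero, mul_zero, mul_zero, mul_zero, add_zero, add_zero]
    rw [Finset.sum_congr rfl (fun k _ => T1_term n k (qb (2*n) (k:ℤ))), ← Finset.mul_sum,
      ← GSdef n]
  have hT2 : ∑ k ∈ Finset.range ((2*n+1)+1+1),
      (1 + (PowerSeries.X : PowerSeries ℤ)^(2*(2*n+1))) * (w (n+1) k * qb (2*n) ((k:ℤ)-1))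
      = (1 + (PowerSeries.X : PowerSeries ℤ)^(2*(2*n+1))) * GS n := by
    rw [← Finset.mul_sum, GSdef n]
    congr 1
    rw [Finset.sum_range_succ']
    rw [show (((0:ℕ):ℤ)) - 1 = -1 by norm_num, qb_neg (by norm_num), mul_zero, add_zero]
    rw [Finset.sum_range_succ]
    rw [show (((2*n+1:ℕ)+1:ℕ):ℤ) - 1 = ((2*n+1 : ℕ):ℤ) by push_cast; ring]
    rw [qb_gt (show ((2*n:ℕ):ℤ) < ((2*n+1:ℕ):ℤ) by push_cast; omega), mul_zero, add_zero]
    refine Finset.sum_congr rfl fun k _ => ?_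
    rw [w_succ_succ, show (((k:ℕ)+1:ℕ):ℤ) - 1 = ((k:ℕ):ℤ) by push_cast; ring]
  have hT3 : ∑ k ∈ Finset.range ((2*n+1)+1+1),
      w (n+1) k * ((PowerSeries.X : PowerSeries ℤ)^(2*((2*(n:ℤ)+2)-(k:ℤ)).toNat) *
        qb (2*n) ((k:ℤ)-2))
      = -((PowerSeries.X : PowerSeries ℤ)^(2*n+1)) * GS n := by
    rw [Finset.sum_range_succ']
    rw [show (((0:ℕ):ℤ)) - 2 = -2 by norm_num, qb_neg (by norm_num), mul_zero, mul_zero, add_zero]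
    rw [Finset.sum_range_succ']
    rw [show (((0:ℕ)+1:ℕ):ℤ) - 2 = -1 by norm_num, qb_neg (by norm_num), mul_zero, mul_zero,
      add_zero]
    rw [show -((PowerSeries.X : PowerSeries ℤ)^(2*n+1)) * GS n
        = ∑ k ∈ Finset.range (2*n+1),
            -((PowerSeries.X : PowerSeries ℤ)^(2*n+1)) * (w n k * qb (2*n) (k:ℤ)) from by
      rw [GSdef n, Finset.mul_sum]]
    refine Finset.sum_congr rfl fun k hk => ?_
    rw [Finset.mem_range] at hk
    have h2n : k ≤ 2*n := by omega
    rw [show (((k:ℕ)+1+1:ℕ):ℤ) - 2 = ((k:ℕ):ℤ) by push_cast; ring]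
    rw [show (2*((2*(n:ℤ)+2)-(((k:ℕ)+1+1:ℕ):ℤ)).toNat) = 2*(2*n-k) from by
      push_cast
      have : ((2*(n:ℤ)+2)-((k:ℤ)+1+1)).toNat = 2*n-k := by omega
      rw [this]]
    exact T3_term n k h2n (qb (2*n) (k:ℤ))
  rw [hT1, hT2, hT3]
  unfold godd
  ring

lemma GS_eq (n : ℕ) : GS n = (PP godd n)^2 := by
  induction n with
  | zero =>
    unfold GS PP w
    simp [qb_zero]
  | succ n ih =>
    rw [GS_succ, ih, PP_succ]
    ring

noncomputable def ThetaP (n : ℕ) : PowerSeries ℤ := ∑ k ∈ Finset.range (2*n+1), w n k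

noncomputable def Theta : PowerSeries ℤ :=
  1 + 2 * PowerSeries.mk (fun N =>
    ∑ n ∈ Finset.Icc 1 N, if n ^ 2 = N then ((-1 : ℤ)) ^ n else 0)

lemma ThetaP_eq (n : ℕ) : ThetaP n
    = 1 + 2 * ∑ d ∈ Finset.Icc 1 n,
        ((-1 : PowerSeries ℤ))^d * (PowerSeries.X : PowerSeries ℤ)^(d^2) := by
  induction n with
  | zero =>
    unfold ThetaP w
    simp
  | succ n ih =>
    have TPdef : ∀ m, ThetaP m = ∑ k ∈ Finset.range (2*m+1), w m k := fun _ => rfl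
    rw [TPdef (n+1), show 2*(n+1)+1 = (2*n+1)+1+1 by ring, Finset.sum_range_succ',
      Finset.sum_range_succ, Finset.sum_congr rfl (fun k (_ : k ∈ Finset.range (2*n+1)) =>
        w_succ_succ n k), ← TPdef n, ih]
    have hw0 : w (n+1) 0 = ((-1 : PowerSeries ℤ))^(n+1) *
        (PowerSeries.X : PowerSeries ℤ)^((n+1)^2) := by
      unfold w
      rw [show (((0:ℕ):ℤ) - ((n+1:ℕ):ℤ)).natAbs = n+1 from by push_cast; omega]
      norm_num
    have hwtop : w (n+1) ((2*n+1)+1) = ((-1 : PowerSeries ℤ))^(n+1) *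
        (PowerSeries.X : PowerSeries ℤ)^((n+1)^2) := by
      unfold w
      rw [show ((((2*n+1)+1:ℕ):ℤ) - ((n+1:ℕ):ℤ)).natAbs = n+1 from by push_cast; omega,
        show (2*n+1)+1+(n+1) = 2*(n+1) + (n+1) by ring, pow_add]
      norm_num
    rw [hw0, hwtop, Finset.sum_Icc_succ_top (by omega : 1 ≤ n+1)]
    ring

lemma EqN.sum {N : ℕ} {ι : Type*} {s : Finset ι} {f g : ι → PowerSeries ℤ}
    (h : ∀ i ∈ s, EqN N (f i) (g i)) :
    EqN N (∑ i ∈ s, f i) (∑ i ∈ s, g i) := by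
  intro n hn
  rw [map_sum, map_sum]
  exact Finset.sum_congr rfl fun i hi => h i hi n hn

lemma coeff_term (d e m : ℕ) :
    PowerSeries.coeff (R := ℤ) m (((-1 : PowerSeries ℤ))^d * (PowerSeries.X : PowerSeries ℤ)^e)
      = if m = e then (-1 : ℤ)^d else 0 := by
  have : ((-1 : PowerSeries ℤ))^d = PowerSeries.C (R := ℤ) ((-1 : ℤ)^d) := by
    rw [map_pow, map_neg, map_one]
  rw [this, PowerSeries.coeff_C_mul, PowerSeries.coeff_X_pow]
  simp [mul_ite]

lemma eqN_ThetaP (N n : ℕ) (h : N ≤ n) : EqN N (ThetaP n) Theta := by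
  rw [ThetaP_eq]
  intro m hm
  unfold Theta
  rw [map_add, map_add]
  congr 1
  rw [show (2 : PowerSeries ℤ) = PowerSeries.C (R := ℤ) 2 from by rw [map_ofNat]]
  rw [PowerSeries.coeff_C_mul, PowerSeries.coeff_C_mul]
  congr 1
  rw [map_sum, PowerSeries.coeff_mk]
  have hsub : Finset.Icc 1 m ⊆ Finset.Icc 1 n := Finset.Icc_subset_Icc_right (by omega)
  rw [← Finset.sum_subset hsub (fun d hd hnd => ?_)]
  · refine Finset.sum_congr rfl fun d hd => ?_
    rw [coeff_term]
    simp only [Finset.mem_Icc] at hd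
    by_cases hdm : d^2 = m
    · rw [if_pos hdm, if_pos hdm.symm]
    · rw [if_neg hdm, if_neg (fun hc => hdm hc.symm)]
  · rw [coeff_term]
    simp only [Finset.mem_Icc] at hd hnd
    have hd1 : 1 ≤ d := hd.1
    have hdm : m < d := by omega
    have : d ≤ d^2 := Nat.le_self_pow two_ne_zero d
    rw [if_neg (by omega)]

lemma key3 : POdd * POdd * F 2 = Theta := by
  apply eq_of_forall_eqN
  intro N
  set n := 2*N+2 with hn
  have e_odd : EqN N POdd (PP godd n) := eqN_iProd hgodd (by omega)
  have step2 : EqN N (GS n) (ThetaP n * psInv (F 2)) := by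
    have TPdef : ThetaP n = ∑ k ∈ Finset.range (2*n+1), w n k := rfl
    have GSdef : GS n = ∑ k ∈ Finset.range (2*n+1), w n k * qb (2*n) (k:ℤ) := rfl
    rw [GSdef, TPdef, Finset.sum_mul]
    refine EqN.sum fun k hk => ?_
    rw [Finset.mem_range] at hk
    rcases le_or_gt ((((k:ℤ) - (n:ℤ)).natAbs)^2) N with hd | hd
    · -- qb is ≡ psInv (F 2)
      have hdle : (((k:ℤ) - (n:ℤ)).natAbs) ≤ N := by
        have := Nat.le_self_pow two_ne_zero (((k:ℤ) - (n:ℤ)).natAbs)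
        omega
      have h1 : N < k := by omega
      have h2 : N < 2*n - k := by omega
      exact (EqN.refl N (w n k)).mul (eqN_qb h1 h2 (by omega))
    · -- both sides ≡ 0
      have z : ∀ f : PowerSeries ℤ, EqN N (w n k * f) 0 := by
        intro f
        have h0 := EqN.X_pow_mul (f := f) hd
        have := (EqN.refl N (((-1 : PowerSeries ℤ))^(k+n))).mul h0
        rw [mul_zero] at this
        refine EqN.trans ?_ this
        unfold w
        rw [mul_assoc]
        exact EqN.refl _ _
      exact (z _).trans (z _).symm
  have step3 : EqN N (POdd * POdd * F 2) (ThetaP n) := by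
    have e1 : EqN N (POdd * POdd * F 2) ((PP godd n) * (PP godd n) * F 2) :=
      (e_odd.mul e_odd).mul (EqN.refl N (F 2))
    have e2 : (PP godd n) * (PP godd n) * F 2 = GS n * F 2 := by
      rw [GS_eq]
      ring
    have e3 : EqN N (GS n * F 2) (ThetaP n * psInv (F 2) * F 2) :=
      step2.mul (EqN.refl N (F 2))
    have e4 : ThetaP n * psInv (F 2) * F 2 = ThetaP n := by
      calc ThetaP n * psInv (F 2) * F 2 = ThetaP n * (F 2 * psInv (F 2)) := by ring
        _ = ThetaP n := by rw [F2_mul_psInv, mul_one]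
    rw [e2] at e1
    rw [e4] at e3
    exact e1.trans e3
  exact step3.trans (eqN_ThetaP N n (by omega))

/-- Gauss: `(q;q)∞/(−q;q)∞ = 1 + 2∑_{n≥1} (−1)ⁿ q^{n²}`. -/
theorem gauss_theta_identity :
    F 1 * psInv Fneg =
      1 + 2 * PowerSeries.mk (fun N =>
        ∑ n ∈ Finset.Icc 1 N, if n ^ 2 = N then ((-1 : ℤ)) ^ n else 0) := by
  rw [psInv_Fneg_eq_POdd, F1_eq_POdd_mul_F2]
  calc POdd * F 2 * POdd = POdd * POdd * F 2 := by ring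
    _ = Theta := key3
    _ = _ := rfl
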